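/- Let L/K be a finite Galois field extension, G a finite group acting on L through a surjection onto Gal(L/K) with kernel H, with |G| invertible in L. For V, W ∈ Rep_K(G) (finite-dimensional K-linear representations of G), one has dim_K Hom_{L⋊G}(L ⊗_K V, L ⊗_K W) = dim_K Hom_{K[H]}(V|_H, W|_H). -/

import Mathlib

open scoped TensorProduct

variable {K L : Type*} [Field K] [Field L] [Algebra K L]
variable {G : Type*} [Group G]
variable {V W : Type*} [AddCommGroup V] [Module K V] [AddCommGroup W] [Module K W]

/-- The `K`-submodule of `Hom_{L⋊G}(L ⊗_K V, L ⊗_K W)`: `L`-linear maps commuting with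
the diagonal semilinear `G`-action `g · (λ ⊗ v) = g(λ) ⊗ g(v)`. -/
noncomputable def homLG (σ : G →* (L ≃ₐ[K] L))
    (ρV : G →* (V ≃ₗ[K] V)) (ρW : G →* (W ≃ₗ[K] W)) :
    Submodule K ((L ⊗[K] V) →ₗ[K] (L ⊗[K] W)) where
  carrier := {f | (∀ (a : L) (x : L ⊗[K] V), f (a • x) = a • f x) ∧
    ∀ (g : G) (x : L ⊗[K] V),
      f (TensorProduct.map (σ g).toLinearMap (ρV g).toLinearMap x)
        = TensorProduct.map (σ g).toLinearMap (ρW g).toLinearMap (f x)}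
  add_mem' := by
    intro f g hf hg
    exact ⟨fun a x => by simp [hf.1, hg.1], fun g' x => by simp [hf.2, hg.2]⟩
  zero_mem' := ⟨fun a x => by simp, fun g x => by simp⟩
  smul_mem' := by
    intro c f hf
    refine ⟨fun a x => ?_, fun g x => ?_⟩
    · rw [LinearMap.smul_apply, LinearMap.smul_apply, hf.1, smul_comm]
    · simp [hf.2]

/-- The `K`-submodule `Hom_{K[H]}(V, W)` of `H`-equivariant `K`-linear maps,
`H = ker σ`. -/
def homKH (σ : G →* (L ≃ₐ[K] L))
    (ρV : G →* (V ≃ₗ[K] V)) (ρW : G →* (W ≃ₗ[K] W)) :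
    Submodule K (V →ₗ[K] W) where
  carrier := {f | ∀ h ∈ σ.ker, ∀ v : V, f (ρV h v) = ρW h (f v)}
  add_mem' := by intro f g hf hg h hh v; simp [hf h hh, hg h hh]
  zero_mem' := by intro h hh v; simp
  smul_mem' := by intro c f hf h hh v; simp [hf h hh]

/- ### Auxiliary material -/

namespace Stmt13Aux

open Module

/-- A "Dedekind element": dual system witnessing invertibility of the matrix
`(τ (b γ))` of automorphisms applied to a basis. -/
lemma exists_dedekind [FiniteDimensional K L] [IsGalois K L]
    [DecidableEq (L ≃ₐ[K] L)] :
    ∃ a b : (L ≃ₐ[K] L) → L, ∀ τ : L ≃ₐ[K] L,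
      ∑ γ : L ≃ₐ[K] L, a γ * τ (b γ) = if τ = 1 then 1 else 0 := by
  classical
  set n := finrank K L with hn
  obtain B := Module.finBasis K L
  have hcard : Fintype.card (L ≃ₐ[K] L) = n := by
    rw [← Nat.card_eq_fintype_card]; exact IsGalois.card_aut_eq_finrank K L
  obtain e := Fintype.equivFinOfCardEq hcard
  set D : Matrix (L ≃ₐ[K] L) (L ≃ₐ[K] L) L := fun γ τ => τ (B (e γ)) with hD
  have li : LinearIndependent L (fun τ : L ≃ₐ[K] L => (τ : L → L)) := by
    have base := linearIndependent_monoidHom L L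
    have h2 : LinearIndependent L ((fun f : L →* L => (f : L → L)) ∘
        (fun τ : L ≃ₐ[K] L => (τ : L ≃+* L).toRingHom.toMonoidHom)) := by
      apply base.comp
      intro τ τ' h
      ext x
      exact DFunLike.congr_fun h x
    exact h2
  have hinj : Function.Injective D.mulVecLin := by
    rw [← LinearMap.ker_eq_bot, LinearMap.ker_eq_bot']
    intro x hx
    have hx' : ∀ γ, ∑ τ : L ≃ₐ[K] L, τ (B (e γ)) * x τ = 0 := by
      intro γ
      have := congrFun (show D.mulVec x = 0 from hx) γ
      simpa [Matrix.mulVec, dotProduct, hD] using this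
    have hg : (∑ τ : L ≃ₐ[K] L, x τ • (τ.toLinearMap : L →ₗ[K] L)) = 0 := by
      apply B.ext
      intro i
      have := hx' (e.symm i)
      simp only [LinearMap.coe_sum, Finset.sum_apply, LinearMap.smul_apply,
        AlgEquiv.toLinearMap_apply, Equiv.apply_symm_apply, LinearMap.zero_apply,
        smul_eq_mul] at this ⊢
      rw [← this]
      exact Finset.sum_congr rfl fun τ _ => mul_comm _ _
    have := Fintype.linearIndependent_iff.mp li x ?_
    · funext τ; exact this τ
    · funext y
      have := congrFun (congrArg (DFunLike.coe) hg) y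
      simpa using this
  have hbij : Function.Bijective D.mulVecLin :=
    ⟨hinj, LinearMap.injective_iff_surjective.mp hinj⟩
  have hdet : IsUnit D.det := by
    have hb : Function.Bijective (Matrix.toLin' D) := by
      have : ⇑(Matrix.toLin' D) = ⇑D.mulVecLin := by
        funext v
        simp [Matrix.toLin'_apply, Matrix.mulVecLin_apply]
      rw [this]; exact hbij
    have hu : IsUnit (Matrix.toLin' D) :=
      (LinearMap.isUnit_iff_ker_eq_bot _).mpr (LinearMap.ker_eq_bot_of_injective hb.1)
    have := hu.map LinearMap.det
    rwa [LinearMap.det_toLin'] at this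
  refine ⟨Matrix.vecMul (Pi.single 1 1 : (L ≃ₐ[K] L) → L) D⁻¹, fun γ => B (e γ), fun τ => ?_⟩
  have key : Matrix.vecMul (Matrix.vecMul (Pi.single 1 1 : (L ≃ₐ[K] L) → L) D⁻¹) D = Pi.single 1 1 := by
    rw [Matrix.vecMul_vecMul, Matrix.nonsing_inv_mul D hdet, Matrix.vecMul_one]
  have := congrFun key τ
  rw [Matrix.vecMul, dotProduct] at this
  simp only [hD] at this
  simp only [hD]
  rw [this, Pi.single_apply]

lemma fixed_mem_range_algebraMap [FiniteDimensional K L] [IsGalois K L]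
    (x : L) (hx : ∀ τ : L ≃ₐ[K] L, τ x = x) : ∃ k : K, algebraMap K L k = x := by
  have hmem : x ∈ IntermediateField.fixedField
      (IntermediateField.fixingSubgroup (⊥ : IntermediateField K L)) := by
    intro g
    exact hx g
  rw [IsGalois.fixedField_fixingSubgroup] at hmem
  exact IntermediateField.mem_bot.mp hmem

section Speiser

variable {M : Type*} [AddCommGroup M] [Module K M] [Module L M] [IsScalarTower K L M]

/-- Fixed points of a family of `K`-linear maps, as a `K`-submodule. -/
def fixedSub (c : (L ≃ₐ[K] L) → (M →ₗ[K] M)) : Submodule K M where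
  carrier := {x | ∀ τ, c τ x = x}
  add_mem' := fun hx hy τ => by simp [map_add, hx τ, hy τ]
  zero_mem' := fun τ => map_zero _
  smul_mem' := fun k x hx τ => by simp [map_smul, hx τ]

/-- Semilinear Galois descent (Speiser): if a family `c` of `K`-linear maps indexed by
`Gal(L/K)` acts semilinearly on an `L`-vector space `M`, then the `K`-dimension of the
fixed points equals the `L`-dimension of `M`. -/
lemma speiser [FiniteDimensional K L] [IsGalois K L]
    (c : (L ≃ₐ[K] L) → (M →ₗ[K] M))
    (hone : ∀ x, c 1 x = x)
    (hmul : ∀ τ τ' x, c (τ * τ') x = c τ (c τ' x))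
    (hsemi : ∀ τ (a : L) x, c τ (a • x) = τ a • c τ x) :
    finrank K (fixedSub c) = finrank L M := by
  classical
  obtain ⟨a, b, hab⟩ := exists_dedekind (K := K) (L := L)
  set F := fixedSub c with hF
  have hmemF : ∀ (y : M), (∀ τ, c τ y = y) → y ∈ F := fun y hy => hy
  have htr : ∀ (y : M), (∑ τ : L ≃ₐ[K] L, c τ y) ∈ F := by
    intro y
    apply hmemF
    intro τ'
    rw [map_sum]
    rw [← Equiv.sum_comp (Equiv.mulLeft τ') (fun τ => c τ y)]
    exact Finset.sum_congr rfl fun τ _ => by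
      simp only [Equiv.coe_mulLeft]
      exact (hmul τ' τ y).symm
  set ι : L ⊗[K] F →ₗ[L] M := (F.subtype).liftBaseChange L with hι
  have hιtmul : ∀ (lam : L) (m : F), ι (lam ⊗ₜ m) = lam • (m : M) := by
    intro lam m; simp [hι]
  set ρfun : M → L ⊗[K] F :=
    fun x => ∑ γ : L ≃ₐ[K] L, a γ ⊗ₜ (⟨∑ τ : L ≃ₐ[K] L, c τ (b γ • x), htr _⟩ : F) with hρ
  have hιρ : ∀ x : M, ι (ρfun x) = x := by
    intro x
    rw [hρ, map_sum]
    have h1 : ∀ γ : L ≃ₐ[K] L,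
        ι (a γ ⊗ₜ (⟨∑ τ : L ≃ₐ[K] L, c τ (b γ • x), htr _⟩ : F))
          = ∑ τ : L ≃ₐ[K] L, (a γ * τ (b γ)) • c τ x := by
      intro γ
      rw [hιtmul]
      simp only [Finset.smul_sum]
      exact Finset.sum_congr rfl fun τ _ => by rw [hsemi, smul_smul]
    simp only [h1]
    rw [Finset.sum_comm]
    have h2 : ∀ τ : L ≃ₐ[K] L,
        (∑ γ : L ≃ₐ[K] L, (a γ * τ (b γ)) • c τ x)
          = (if τ = 1 then (1:L) else 0) • c τ x := by
      intro τ
      rw [← Finset.sum_smul, hab]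
    simp only [h2, ite_smul, one_smul, zero_smul]
    rw [Finset.sum_ite_eq' Finset.univ (1 : L ≃ₐ[K] L) (fun τ => c τ x)]
    simpa using hone x
  have hρadd : ∀ x y : M, ρfun (x + y) = ρfun x + ρfun y := by
    intro x y
    rw [hρ, ← Finset.sum_add_distrib]
    refine Finset.sum_congr rfl fun γ _ => ?_
    rw [← TensorProduct.tmul_add]
    congr 1
    apply Subtype.ext
    simp [smul_add, map_add, Finset.sum_add_distrib]
  have hρι : ∀ z : L ⊗[K] F, ρfun (ι z) = z := by
    intro z
    induction z using TensorProduct.induction_on with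
    | zero =>
      rw [map_zero, hρ]
      have : ∀ γ : L ≃ₐ[K] L,
          a γ ⊗ₜ[K] (⟨∑ τ : L ≃ₐ[K] L, c τ (b γ • (0:M)), htr _⟩ : F)
            = (0 : L ⊗[K] F) := by
        intro γ
        have : (⟨∑ τ : L ≃ₐ[K] L, c τ (b γ • (0:M)), htr _⟩ : F) = 0 := by
          apply Subtype.ext; simp
        rw [this, TensorProduct.tmul_zero]
      simp only [this, Finset.sum_const_zero]
    | tmul lam m =>
      rw [hιtmul, hρ]
      have hm : ∀ τ, c τ (m : M) = (m : M) := m.2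
      have hfix : ∀ γ : L ≃ₐ[K] L, ∀ τ' : L ≃ₐ[K] L,
          τ' (∑ τ : L ≃ₐ[K] L, τ (b γ * lam)) = ∑ τ : L ≃ₐ[K] L, τ (b γ * lam) := by
        intro γ τ'
        rw [map_sum, ← Equiv.sum_comp (Equiv.mulLeft τ')
          (fun τ : L ≃ₐ[K] L => τ (b γ * lam))]
        exact Finset.sum_congr rfl fun τ _ => by
          simp only [Equiv.coe_mulLeft]; rfl
      choose k hk using fun γ =>
        fixed_mem_range_algebraMap (∑ τ : L ≃ₐ[K] L, τ (b γ * lam)) (hfix γ)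
      have hinner : ∀ γ : L ≃ₐ[K] L,
          (⟨∑ τ : L ≃ₐ[K] L, c τ (b γ • lam • (m : M)), htr _⟩ : F) = k γ • m := by
        intro γ
        apply Subtype.ext
        have : ∀ τ : L ≃ₐ[K] L, c τ (b γ • lam • (m : M)) = τ (b γ * lam) • (m : M) := by
          intro τ
          rw [smul_smul, hsemi, hm]
        simp only [this]
        rw [← Finset.sum_smul, Submodule.coe_smul, ← hk γ, algebraMap_smul]
      simp only [hinner]
      have hsw : ∀ γ : L ≃ₐ[K] L, a γ ⊗ₜ[K] (k γ • m) = (k γ • a γ) ⊗ₜ[K] m := by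
        intro γ
        rw [TensorProduct.tmul_smul, TensorProduct.smul_tmul']
      simp only [hsw]
      rw [← TensorProduct.sum_tmul]
      congr 1
      have : ∀ γ : L ≃ₐ[K] L, k γ • a γ = a γ * (∑ τ : L ≃ₐ[K] L, τ (b γ * lam)) := by
        intro γ
        rw [Algebra.smul_def, hk γ, mul_comm]
      simp only [this, Finset.mul_sum]
      rw [Finset.sum_comm]
      have h3 : ∀ τ : L ≃ₐ[K] L,
          (∑ γ : L ≃ₐ[K] L, a γ * τ (b γ * lam))
            = (if τ = 1 then (1:L) else 0) * τ lam := by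
        intro τ
        rw [← hab τ, Finset.sum_mul]
        exact Finset.sum_congr rfl fun γ _ => by rw [map_mul, mul_assoc]
      simp only [h3, ite_mul, one_mul, zero_mul]
      rw [Finset.sum_ite_eq' Finset.univ (1 : L ≃ₐ[K] L) (fun τ => τ lam)]
      simp
    | add z w hz hw =>
      rw [map_add, hρadd, hz, hw]
  have hbij : Function.Bijective ι :=
    ⟨fun z w h => by rw [← hρι z, ← hρι w, h],
     fun x => ⟨ρfun x, hιρ x⟩⟩
  have e1 : (L ⊗[K] F) ≃ₗ[L] M := LinearEquiv.ofBijective ι hbij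
  rw [← e1.finrank_eq, Module.finrank_baseChange]


/-- Abstract form of the final dimension count. -/
lemma main_count [FiniteDimensional K L] [IsGalois K L]
    {X : Type*} [AddCommGroup X] [Module K X]
    {Y : Type*} [AddCommGroup Y] [Module K Y]
    (c : (L ≃ₐ[K] L) → (M →ₗ[K] M))
    (hone : ∀ x, c 1 x = x)
    (hmul : ∀ τ τ' x, c (τ * τ') x = c τ (c τ' x))
    (hsemi : ∀ τ (a : L) x, c τ (a • x) = τ a • c τ x)
    (E1 : X ≃ₗ[K] fixedSub c) (E2 : (L ⊗[K] Y) ≃ₗ[L] M) :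
    finrank K X = finrank K Y := by
  rw [E1.finrank_eq, speiser c hone hmul hsemi, ← E2.finrank_eq, Module.finrank_baseChange]

end Speiser


section Plumbing

variable {G : Type*} [Group G]
variable {V W : Type*} [AddCommGroup V] [Module K V] [AddCommGroup W] [Module K W]
variable (σ : G →* (L ≃ₐ[K] L)) (ρV : G →* (V ≃ₗ[K] V)) (ρW : G →* (W ≃ₗ[K] W))

/-- Semilinearity of the diagonal action on `L ⊗ W`. -/
lemma map_semilinear (τ : L ≃ₐ[K] L) (ρ : W ≃ₗ[K] W) (a : L) (x : L ⊗[K] W) :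
    TensorProduct.map τ.toLinearMap ρ.toLinearMap (a • x)
      = τ a • TensorProduct.map τ.toLinearMap ρ.toLinearMap x := by
  induction x using TensorProduct.induction_on with
  | zero => simp
  | tmul c w =>
      rw [TensorProduct.smul_tmul', TensorProduct.map_tmul, TensorProduct.map_tmul,
        TensorProduct.smul_tmul']
      simp [smul_eq_mul, map_mul]
  | add x y hx hy => rw [smul_add, map_add, map_add, hx, hy, smul_add]

lemma rho_mul_apply (g g' : G) (v : V) : (ρV (g * g')) v = (ρV g) ((ρV g') v) := by
  rw [map_mul]; rfl

lemma rho_inv_cancel (g : G) (v : V) : (ρV g) ((ρV g⁻¹) v) = v := by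
  rw [← rho_mul_apply, mul_inv_cancel, map_one]; rfl

lemma rho_inv_cancel' (g : G) (v : V) : (ρV g⁻¹) ((ρV g) v) = v := by
  rw [← rho_mul_apply, inv_mul_cancel, map_one]; rfl

/-- The (semilinear) action of `g : G` on `Hom_K(V, L ⊗ W)`. -/
noncomputable def Pia (g : G) :
    (V →ₗ[K] L ⊗[K] W) →ₗ[K] (V →ₗ[K] L ⊗[K] W) where
  toFun φ := (TensorProduct.map (σ g).toLinearMap (ρW g).toLinearMap)
      ∘ₗ φ ∘ₗ (ρV g⁻¹).toLinearMap
  map_add' φ φ' := by ext v; simp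
  map_smul' k φ := by ext v; simp

lemma Pia_apply (g : G) (φ : V →ₗ[K] L ⊗[K] W) (v : V) :
    Pia σ ρV ρW g φ v
      = TensorProduct.map (σ g).toLinearMap (ρW g).toLinearMap (φ ((ρV g⁻¹) v)) := rfl

lemma map_gmul_apply (g g' : G) (x : L ⊗[K] W) :
    TensorProduct.map (σ (g * g')).toLinearMap (ρW (g * g')).toLinearMap x
      = TensorProduct.map (σ g).toLinearMap (ρW g).toLinearMap
          (TensorProduct.map (σ g').toLinearMap (ρW g').toLinearMap x) := by
  induction x using TensorProduct.induction_on with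
  | zero => simp
  | tmul c w =>
      simp only [TensorProduct.map_tmul, AlgEquiv.toLinearMap_apply,
        LinearEquiv.coe_coe]
      rw [map_mul σ, map_mul ρW]
      rfl
  | add x y hx hy => simp only [map_add, hx, hy]

lemma Pia_mul (g g' : G) (φ : V →ₗ[K] L ⊗[K] W) :
    Pia σ ρV ρW (g * g') φ = Pia σ ρV ρW g (Pia σ ρV ρW g' φ) := by
  ext v
  simp only [Pia_apply]
  rw [← map_gmul_apply]
  congr 2
  rw [mul_inv_rev, rho_mul_apply]

lemma Pia_smul (g : G) (a : L) (φ : V →ₗ[K] L ⊗[K] W) :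
    Pia σ ρV ρW g (a • φ) = σ g a • Pia σ ρV ρW g φ := by
  ext v
  simp only [Pia_apply, LinearMap.smul_apply]
  rw [map_semilinear]

/-- The `L`-submodule of `H`-equivariant maps in `Hom_K(V, L ⊗ W)`, `H = ker σ`. -/
noncomputable def Qsub : Submodule L (V →ₗ[K] L ⊗[K] W) where
  carrier := {φ | ∀ h ∈ σ.ker, Pia σ ρV ρW h φ = φ}
  add_mem' := fun hφ hψ h hh => by rw [map_add, hφ h hh, hψ h hh]
  zero_mem' := fun h hh => map_zero _
  smul_mem' := fun a φ hφ h hh => by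
    rw [Pia_smul, hφ h hh, MonoidHom.mem_ker.mp hh]
    simp

noncomputable instance instAddCommGroupQsub : AddCommGroup (Qsub σ ρV ρW) :=
  @Submodule.addCommGroup L (V →ₗ[K] L ⊗[K] W) _ _ _ (Qsub σ ρV ρW)

noncomputable instance instAddCommGroupHomLG : AddCommGroup (homLG σ ρV ρW) :=
  @Submodule.addCommGroup K ((L ⊗[K] V) →ₗ[K] (L ⊗[K] W)) _ _ _ (homLG σ ρV ρW)

noncomputable instance instAddCommGroupHomKH : AddCommGroup (homKH σ ρV ρW) :=
  @Submodule.addCommGroup K (V →ₗ[K] W) _ _ _ (homKH σ ρV ρW)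

lemma mem_Qsub {φ : V →ₗ[K] L ⊗[K] W} :
    φ ∈ Qsub σ ρV ρW ↔ ∀ h ∈ σ.ker, Pia σ ρV ρW h φ = φ := Iff.rfl

lemma Qsub_stable (g : G) {φ : V →ₗ[K] L ⊗[K] W} (hφ : φ ∈ Qsub σ ρV ρW) :
    Pia σ ρV ρW g φ ∈ Qsub σ ρV ρW := by
  intro h hh
  rw [← Pia_mul]
  have h2 : g⁻¹ * h * g ∈ σ.ker := by
    rw [MonoidHom.mem_ker] at hh ⊢
    simp [map_mul, hh]
  have hge : h * g = g * (g⁻¹ * h * g) := by group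
  rw [hge, Pia_mul, hφ _ h2]

/-- The induced semilinear action of `Gal(L/K)` on `Qsub`, via a section `s` of `σ`. -/
noncomputable def cmap (s : (L ≃ₐ[K] L) → G) (τ : L ≃ₐ[K] L) :
    (Qsub σ ρV ρW) →ₗ[K] (Qsub σ ρV ρW) where
  toFun q := ⟨Pia σ ρV ρW (s τ) ↑q, Qsub_stable σ ρV ρW (s τ) q.2⟩
  map_add' q q' := Subtype.ext (by simp)
  map_smul' k q := Subtype.ext (by simp)

lemma cmap_coe (s : (L ≃ₐ[K] L) → G) (τ : L ≃ₐ[K] L) (q : Qsub σ ρV ρW) :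
    (cmap σ ρV ρW s τ q : V →ₗ[K] L ⊗[K] W) = Pia σ ρV ρW (s τ) ↑q := rfl


/-- Contraction `L ⊗ (L ⊗ W) → L ⊗ W`, `a ⊗ x ↦ a • x`. -/
noncomputable def contr : L ⊗[K] (L ⊗[K] W) →ₗ[K] L ⊗[K] W :=
  TensorProduct.lift (LinearMap.mk₂ K (fun (a : L) (x : L ⊗[K] W) => a • x)
    (fun a a' x => add_smul a a' x) (fun k a x => smul_assoc k a x)
    (fun a x y => smul_add a x y) (fun k a x => smul_comm a k x))

/-- Extension of `φ : V → L ⊗ W` to an `L`-linear map `L ⊗ V → L ⊗ W`. -/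
noncomputable def alpha (φ : V →ₗ[K] L ⊗[K] W) : (L ⊗[K] V) →ₗ[K] (L ⊗[K] W) :=
  contr ∘ₗ (LinearMap.lTensor L φ)

lemma alpha_tmul (φ : V →ₗ[K] L ⊗[K] W) (a : L) (v : V) :
    alpha φ (a ⊗ₜ v) = a • φ v := by
  simp [alpha, contr, LinearMap.lTensor_tmul, TensorProduct.lift.tmul]

lemma alpha_smul_arg (φ : V →ₗ[K] L ⊗[K] W) (a : L) (x : L ⊗[K] V) :
    alpha φ (a • x) = a • alpha φ x := by
  induction x using TensorProduct.induction_on with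
  | zero => simp
  | tmul b v =>
      rw [TensorProduct.smul_tmul', alpha_tmul, alpha_tmul, smul_eq_mul, mul_smul]
  | add x y hx hy => rw [smul_add, map_add, map_add, hx, hy, smul_add]

lemma Pia_all_apply {φ : V →ₗ[K] L ⊗[K] W} {g : G}
    (hg : Pia σ ρV ρW g φ = φ) (v : V) :
    φ ((ρV g) v)
      = TensorProduct.map (σ g).toLinearMap (ρW g).toLinearMap (φ v) := by
  have h1 := DFunLike.congr_fun hg ((ρV g) v)
  rw [Pia_apply, rho_inv_cancel'] at h1
  exact h1.symm

lemma alpha_equivariant {φ : V →ₗ[K] L ⊗[K] W}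
    (hall : ∀ g : G, Pia σ ρV ρW g φ = φ) (g : G) (x : L ⊗[K] V) :
    alpha φ (TensorProduct.map (σ g).toLinearMap (ρV g).toLinearMap x)
      = TensorProduct.map (σ g).toLinearMap (ρW g).toLinearMap (alpha φ x) := by
  induction x using TensorProduct.induction_on with
  | zero => simp
  | tmul b v =>
      rw [TensorProduct.map_tmul]
      simp only [AlgEquiv.toLinearMap_apply, LinearEquiv.coe_coe]
      rw [alpha_tmul, alpha_tmul, Pia_all_apply σ ρV ρW (hall g), map_semilinear]
  | add x y hx hy => simp only [map_add, hx, hy]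

lemma beta_fix {F : (L ⊗[K] V) →ₗ[K] (L ⊗[K] W)} (hF : F ∈ homLG σ ρV ρW) (g : G) :
    Pia σ ρV ρW g (F ∘ₗ TensorProduct.mk K L V 1) = F ∘ₗ TensorProduct.mk K L V 1 := by
  ext v
  simp only [Pia_apply, LinearMap.comp_apply, TensorProduct.mk_apply]
  have h2 := hF.2 g ((1:L) ⊗ₜ[K] ((ρV g⁻¹) v))
  rw [TensorProduct.map_tmul] at h2
  rw [← h2]
  simp only [AlgEquiv.toLinearMap_apply, LinearEquiv.coe_coe]
  rw [_root_.map_one, rho_inv_cancel]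

lemma all_fixed {φ : V →ₗ[K] L ⊗[K] W} (hQm : φ ∈ Qsub σ ρV ρW)
    (s : (L ≃ₐ[K] L) → G) (hs : ∀ τ, σ (s τ) = τ)
    (hfix : ∀ τ, Pia σ ρV ρW (s τ) φ = φ) (g : G) : Pia σ ρV ρW g φ = φ := by
  have hker : (s (σ g))⁻¹ * g ∈ σ.ker := by
    rw [MonoidHom.mem_ker]
    simp [map_mul, hs, map_inv]
  have hid : g = s (σ g) * ((s (σ g))⁻¹ * g) := by group
  calc Pia σ ρV ρW g φ = Pia σ ρV ρW (s (σ g) * ((s (σ g))⁻¹ * g)) φ := by rw [← hid]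
    _ = Pia σ ρV ρW (s (σ g)) (Pia σ ρV ρW ((s (σ g))⁻¹ * g) φ) := Pia_mul _ _ _ _ _ _
    _ = Pia σ ρV ρW (s (σ g)) φ := by rw [hQm _ hker]
    _ = φ := hfix _

end Plumbing

section Proj

variable {G : Type*} [Group G]
variable {V W : Type*} [AddCommGroup V] [Module K V] [AddCommGroup W] [Module K W]
variable {ι : Type*} [Fintype ι] (B : Basis ι K L)

/-- Coordinate projection `L ⊗ W → W` along a basis of `L` over `K`. -/
noncomputable def Pr (i : ι) : L ⊗[K] W →ₗ[K] W :=
  (TensorProduct.lid K W).toLinearMap ∘ₗ (TensorProduct.map (B.coord i) LinearMap.id)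

lemma Pr_tmul (i : ι) (a : L) (w : W) : Pr B i (a ⊗ₜ w) = B.coord i a • w := by
  simp [Pr]

lemma Pr_sum (x : L ⊗[K] W) : ∑ i, B i ⊗ₜ[K] Pr B i x = x := by
  induction x using TensorProduct.induction_on with
  | zero => simp
  | tmul a w =>
      simp only [Pr_tmul]
      calc ∑ i, B i ⊗ₜ[K] (B.coord i a • w)
          = ∑ i, (B.coord i a • B i) ⊗ₜ[K] w := by
            refine Finset.sum_congr rfl fun i _ => ?_
            rw [TensorProduct.tmul_smul, TensorProduct.smul_tmul']
        _ = a ⊗ₜ[K] w := by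
            rw [← TensorProduct.sum_tmul]
            congr 1
            simp only [Basis.coord_apply]
            exact B.sum_repr a
  | add x y hx hy =>
      simp only [map_add, TensorProduct.tmul_add, Finset.sum_add_distrib, hx, hy]

variable (σ : G →* (L ≃ₐ[K] L)) (ρW : G →* (W ≃ₗ[K] W))

lemma Pr_comm (i : ι) {h : G} (hh : h ∈ σ.ker) (x : L ⊗[K] W) :
    Pr B i (TensorProduct.map (σ h).toLinearMap (ρW h).toLinearMap x)
      = (ρW h) (Pr B i x) := by
  induction x using TensorProduct.induction_on with
  | zero => simp
  | tmul a w =>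
      rw [TensorProduct.map_tmul, Pr_tmul, Pr_tmul]
      simp only [AlgEquiv.toLinearMap_apply, LinearEquiv.coe_coe]
      rw [MonoidHom.mem_ker.mp hh]
      simp
  | add x y hx hy => simp only [map_add, hx, hy]

end Proj

end Stmt13Aux

set_option maxHeartbeats 4000000 in
set_option synthInstance.maxHeartbeats 2000000 in
/-- Let `L/K` be a finite Galois field extension, `G` a finite group
acting on `L` through a surjection onto `Gal(L/K)` with kernel `H`, with `|G|`
invertible in `L`.  For finite-dimensional `K`-linear representations `V, W` of `G`,
`dim_K Hom_{L⋊G}(L ⊗_K V, L ⊗_K W) = dim_K Hom_{K[H]}(V|_H, W|_H)`. -/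
theorem stmt13 [FiniteDimensional K L] [IsGalois K L] [Fintype G]
    (σ : G →* (L ≃ₐ[K] L)) (hσ : Function.Surjective σ)
    (hcard : IsUnit ((Fintype.card G : L)))
    [FiniteDimensional K V] [FiniteDimensional K W]
    (ρV : G →* (V ≃ₗ[K] V)) (ρW : G →* (W ≃ₗ[K] W)) :
    Module.finrank K (homLG σ ρV ρW) = Module.finrank K (homKH σ ρV ρW) := by
  classical
  open Stmt13Aux in
  set s : (L ≃ₐ[K] L) → G := Function.surjInv hσ with hsdef
  have hs : ∀ τ, σ (s τ) = τ := fun τ => Function.surjInv_eq hσ τ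
  set c := Stmt13Aux.cmap σ ρV ρW s with hc
  -- Speiser hypotheses for `c`
  have hone : ∀ q : Stmt13Aux.Qsub σ ρV ρW, c 1 q = q := by
    intro q
    apply Subtype.ext
    rw [hc, Stmt13Aux.cmap_coe]
    exact q.2 _ (MonoidHom.mem_ker.mpr (hs 1))
  have hmul : ∀ τ τ' (q : Stmt13Aux.Qsub σ ρV ρW), c (τ * τ') q = c τ (c τ' q) := by
    intro τ τ' q
    apply Subtype.ext
    rw [hc, Stmt13Aux.cmap_coe, Stmt13Aux.cmap_coe, Stmt13Aux.cmap_coe]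
    have hker : (s (τ * τ'))⁻¹ * (s τ * s τ') ∈ σ.ker := by
      rw [MonoidHom.mem_ker]
      simp only [map_mul, hs, map_inv]
      group
    symm
    calc Stmt13Aux.Pia σ ρV ρW (s τ) (Stmt13Aux.Pia σ ρV ρW (s τ') ↑q)
        = Stmt13Aux.Pia σ ρV ρW (s τ * s τ') ↑q := (Stmt13Aux.Pia_mul σ ρV ρW _ _ _).symm
      _ = Stmt13Aux.Pia σ ρV ρW (s (τ * τ') * ((s (τ * τ'))⁻¹ * (s τ * s τ'))) ↑q := by
          rw [mul_inv_cancel_left]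
      _ = Stmt13Aux.Pia σ ρV ρW (s (τ * τ'))
            (Stmt13Aux.Pia σ ρV ρW ((s (τ * τ'))⁻¹ * (s τ * s τ')) ↑q) :=
          Stmt13Aux.Pia_mul σ ρV ρW _ _ _
      _ = Stmt13Aux.Pia σ ρV ρW (s (τ * τ')) ↑q := by rw [q.2 _ hker]
  have hsemi : ∀ τ (a : L) (q : Stmt13Aux.Qsub σ ρV ρW), c τ (a • q) = τ a • c τ q := by
    intro τ a q
    apply Subtype.ext
    rw [hc, Stmt13Aux.cmap_coe]
    have h1 : ((a • q : Stmt13Aux.Qsub σ ρV ρW) : V →ₗ[K] L ⊗[K] W) = a • (q : V →ₗ[K] L ⊗[K] W) := rfl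
    rw [h1, Stmt13Aux.Pia_smul, hs]
    rfl
  have h2 := Stmt13Aux.speiser (K := K) (L := L) (M := ↥(Stmt13Aux.Qsub σ ρV ρW)) c hone hmul hsemi
  -- Step 1 : homLG ≃ fixed points of `c`
  have toQ : ∀ F : homLG σ ρV ρW,
      (F : (L ⊗[K] V) →ₗ[K] (L ⊗[K] W)) ∘ₗ TensorProduct.mk K L V 1 ∈ Stmt13Aux.Qsub σ ρV ρW :=
    fun F h _ => Stmt13Aux.beta_fix σ ρV ρW F.2 h
  have tofix : ∀ F : homLG σ ρV ρW,
      (⟨(F : (L ⊗[K] V) →ₗ[K] (L ⊗[K] W)) ∘ₗ TensorProduct.mk K L V 1, toQ F⟩ :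
        Stmt13Aux.Qsub σ ρV ρW) ∈ Stmt13Aux.fixedSub (M := ↥(Stmt13Aux.Qsub σ ρV ρW)) c :=
    fun F τ => Subtype.ext (Stmt13Aux.beta_fix σ ρV ρW F.2 (s τ))
  have hall : ∀ q : Stmt13Aux.fixedSub (M := ↥(Stmt13Aux.Qsub σ ρV ρW)) c, ∀ g : G,
      Stmt13Aux.Pia σ ρV ρW g ((q : Stmt13Aux.Qsub σ ρV ρW) : V →ₗ[K] L ⊗[K] W)
        = ((q : Stmt13Aux.Qsub σ ρV ρW) : V →ₗ[K] L ⊗[K] W) := by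
    intro q g
    refine Stmt13Aux.all_fixed σ ρV ρW (q : Stmt13Aux.Qsub σ ρV ρW).2 s hs ?_ g
    intro τ
    exact Subtype.ext_iff.mp (q.2 τ)
  have memLG : ∀ q : Stmt13Aux.fixedSub (M := ↥(Stmt13Aux.Qsub σ ρV ρW)) c,
      Stmt13Aux.alpha ((q : Stmt13Aux.Qsub σ ρV ρW) : V →ₗ[K] L ⊗[K] W) ∈ homLG σ ρV ρW :=
    fun q => ⟨fun a x => Stmt13Aux.alpha_smul_arg _ a x,
      fun g x => Stmt13Aux.alpha_equivariant σ ρV ρW (hall q) g x⟩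
  have E1 : (homLG σ ρV ρW) ≃ₗ[K] (Stmt13Aux.fixedSub (M := ↥(Stmt13Aux.Qsub σ ρV ρW)) c) :=
    { toFun := fun F => ⟨⟨_, toQ F⟩, tofix F⟩
      invFun := fun q => ⟨Stmt13Aux.alpha _, memLG q⟩
      map_add' := by
        intro F F'
        apply Subtype.ext; apply Subtype.ext
        ext v
        simp
      map_smul' := by
        intro k F
        apply Subtype.ext; apply Subtype.ext
        ext v
        simp
      left_inv := by
        intro F
        apply Subtype.ext
        apply TensorProduct.ext'
        intro a v
        rw [Stmt13Aux.alpha_tmul]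
        have h1 := F.2.1 a ((1:L) ⊗ₜ[K] v)
        rw [TensorProduct.smul_tmul', smul_eq_mul, mul_one] at h1
        simp only [LinearMap.comp_apply, TensorProduct.mk_apply]
        rw [← h1]
      right_inv := by
        intro q
        apply Subtype.ext; apply Subtype.ext
        ext v
        simp only [LinearMap.comp_apply, TensorProduct.mk_apply]
        rw [Stmt13Aux.alpha_tmul, one_smul] }
  -- Step 3 : Qsub ≃ L ⊗ homKH
  set lB := Module.finBasis K L with hlB
  have memQ : ∀ f : homKH σ ρV ρW,
      (TensorProduct.mk K L W 1) ∘ₗ (f : V →ₗ[K] W) ∈ Stmt13Aux.Qsub σ ρV ρW := by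
    intro f h hh
    ext v
    simp only [Stmt13Aux.Pia_apply, LinearMap.comp_apply, TensorProduct.mk_apply,
      TensorProduct.map_tmul, AlgEquiv.toLinearMap_apply, LinearEquiv.coe_coe]
    rw [_root_.map_one, ← f.2 h hh, Stmt13Aux.rho_inv_cancel]
  set inclKH : (homKH σ ρV ρW) →ₗ[K] (Stmt13Aux.Qsub σ ρV ρW) :=
    { toFun := fun f => ⟨(TensorProduct.mk K L W 1) ∘ₗ (f : V →ₗ[K] W), memQ f⟩
      map_add' := fun f f' => by apply Subtype.ext; ext v; simp [TensorProduct.tmul_add]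
      map_smul' := fun k f => by apply Subtype.ext; ext v; simp [TensorProduct.tmul_smul] }
    with hincl
  set u : L ⊗[K] (homKH σ ρV ρW) →ₗ[L] (Stmt13Aux.Qsub σ ρV ρW) :=
    inclKH.liftBaseChange L with hu
  have memKH : ∀ (φ : Stmt13Aux.Qsub σ ρV ρW) (i : Fin (Module.finrank K L)),
      Stmt13Aux.Pr lB i ∘ₗ (φ : V →ₗ[K] L ⊗[K] W) ∈ homKH σ ρV ρW := by
    intro φ i h hh v
    simp only [LinearMap.comp_apply]
    rw [Stmt13Aux.Pia_all_apply σ ρV ρW (φ.2 h hh), Stmt13Aux.Pr_comm lB σ ρW i hh]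
  set vfun : Stmt13Aux.Qsub σ ρV ρW → L ⊗[K] (homKH σ ρV ρW) := fun φ =>
    ∑ i, lB i ⊗ₜ (⟨Stmt13Aux.Pr lB i ∘ₗ (φ : V →ₗ[K] L ⊗[K] W), memKH φ i⟩ : homKH σ ρV ρW)
    with hv
  have huv : ∀ φ : Stmt13Aux.Qsub σ ρV ρW, u (vfun φ) = φ := by
    intro φ
    apply Subtype.ext
    rw [hv, map_sum]
    have hterm : ∀ i, u (lB i ⊗ₜ (⟨Stmt13Aux.Pr lB i ∘ₗ (φ : V →ₗ[K] L ⊗[K] W), memKH φ i⟩ :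
        homKH σ ρV ρW)) = lB i • inclKH ⟨Stmt13Aux.Pr lB i ∘ₗ (φ : V →ₗ[K] L ⊗[K] W), memKH φ i⟩ := by
      intro i
      rw [hu, LinearMap.liftBaseChange_tmul]
    simp only [hterm]
    rw [AddSubmonoidClass.coe_finset_sum]
    ext v
    simp only [LinearMap.coe_sum, Finset.sum_apply]
    have hterm2 : ∀ i, ((lB i • inclKH ⟨Stmt13Aux.Pr lB i ∘ₗ (φ : V →ₗ[K] L ⊗[K] W), memKH φ i⟩ :
        Stmt13Aux.Qsub σ ρV ρW) : V →ₗ[K] L ⊗[K] W) v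
          = lB i ⊗ₜ[K] (Stmt13Aux.Pr lB i ((φ : V →ₗ[K] L ⊗[K] W) v)) := by
      intro i
      have : ((lB i • inclKH ⟨Stmt13Aux.Pr lB i ∘ₗ (φ : V →ₗ[K] L ⊗[K] W), memKH φ i⟩ :
          Stmt13Aux.Qsub σ ρV ρW) : V →ₗ[K] L ⊗[K] W)
            = lB i • ((TensorProduct.mk K L W 1) ∘ₗ (Stmt13Aux.Pr lB i ∘ₗ (φ : V →ₗ[K] L ⊗[K] W))) := by
        rw [Submodule.coe_smul, hincl]; rfl
      rw [this]
      simp only [LinearMap.smul_apply, LinearMap.comp_apply, TensorProduct.mk_apply]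
      rw [TensorProduct.smul_tmul', smul_eq_mul, mul_one]
    simp only [hterm2]
    exact Stmt13Aux.Pr_sum lB ((φ : V →ₗ[K] L ⊗[K] W) v)
  have hvadd : ∀ x y : Stmt13Aux.Qsub σ ρV ρW, vfun (x + y) = vfun x + vfun y := by
    intro x y
    rw [hv, ← Finset.sum_add_distrib]
    refine Finset.sum_congr rfl fun i _ => ?_
    rw [← TensorProduct.tmul_add]
    congr 1
    apply Subtype.ext
    ext v
    simp
  have hvu : ∀ z : L ⊗[K] (homKH σ ρV ρW), vfun (u z) = z := by
    intro z
    induction z using TensorProduct.induction_on with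
    | zero =>
      rw [map_zero, hv]
      have : ∀ i, (⟨Stmt13Aux.Pr lB i ∘ₗ (((0 : Stmt13Aux.Qsub σ ρV ρW)) : V →ₗ[K] L ⊗[K] W),
          memKH 0 i⟩ : homKH σ ρV ρW) = 0 := by
        intro i
        apply Subtype.ext
        ext v
        simp
      simp only [this, TensorProduct.tmul_zero, Finset.sum_const_zero]
    | tmul a f =>
      rw [hu, LinearMap.liftBaseChange_tmul, hv]
      have hterm : ∀ i, (⟨Stmt13Aux.Pr lB i ∘ₗ ((a • inclKH f : Stmt13Aux.Qsub σ ρV ρW) :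
          V →ₗ[K] L ⊗[K] W), memKH _ i⟩ : homKH σ ρV ρW) = lB.coord i a • f := by
        intro i
        apply Subtype.ext
        ext v
        have h3 : ((a • inclKH f : Stmt13Aux.Qsub σ ρV ρW) : V →ₗ[K] L ⊗[K] W)
            = a • ((TensorProduct.mk K L W 1) ∘ₗ ((f : homKH σ ρV ρW) : V →ₗ[K] W)) := by
          rw [Submodule.coe_smul, hincl]; rfl
        simp only [LinearMap.comp_apply, h3, LinearMap.smul_apply, TensorProduct.mk_apply]
        rw [TensorProduct.smul_tmul', smul_eq_mul, mul_one, Stmt13Aux.Pr_tmul]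
        rfl
      simp only [hterm]
      calc ∑ i, lB i ⊗ₜ[K] (lB.coord i a • f)
          = ∑ i, (lB.coord i a • lB i) ⊗ₜ[K] f := by
            refine Finset.sum_congr rfl fun i _ => ?_
            rw [TensorProduct.tmul_smul, TensorProduct.smul_tmul']
        _ = a ⊗ₜ[K] f := by
            rw [← TensorProduct.sum_tmul]
            congr 1
            simp only [Module.Basis.coord_apply]
            exact lB.sum_repr a
    | add z w hz hw =>
      rw [map_add, hvadd, hz, hw]
  have hubij : Function.Bijective u :=
    ⟨fun z w h => by rw [← hvu z, ← hvu w, h], fun φ => ⟨vfun φ, huv φ⟩⟩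
  have E2 : (L ⊗[K] (homKH σ ρV ρW)) ≃ₗ[L] (Stmt13Aux.Qsub σ ρV ρW) :=
    LinearEquiv.ofBijective u hubij
  exact Stmt13Aux.main_count (K := K) (L := L) (M := ↥(Stmt13Aux.Qsub σ ρV ρW))
    c hone hmul hsemi E1 E2
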